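/- Interlacing of generalized eigenvalues under one-dimensional reduction: let A', B' be (symmetric positive definite) N×N matrices and A, B their top-left (N−1)×(N−1) principal submatrices. If λ₁^{(1)} ≤ … ≤ λ_N^{(1)} are the eigenvalues of A'B'⁻¹ and λ₁^{(2)} ≤ … ≤ λ_{N−1}^{(2)} are the eigenvalues of AB⁻¹, then λ_k^{(1)} ≤ λ_k^{(2)} ≤ λ_{k+1}^{(1)} for all 1 ≤ k ≤ N−1. -/

import Mathlib

set_option linter.unusedSectionVars false

open Matrix Polynomial Finset Module

variable {n : Type*} [Fintype n] [DecidableEq n]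

lemma my_charpoly_conj (P M : Matrix n n ℝ) (h : IsUnit P.det) :
    (P * M * P⁻¹).charpoly = M.charpoly := by
  have hPm : IsUnit ((C : ℝ →+* ℝ[X]).mapMatrix P).det := by
    rw [← RingHom.map_det]
    exact h.map _
  have key : (C : ℝ →+* ℝ[X]).mapMatrix P * charmatrix M
      = charmatrix (P * M * P⁻¹) * (C : ℝ →+* ℝ[X]).mapMatrix P := by
    unfold charmatrix
    rw [mul_sub, sub_mul]
    congr 1
    · have : (C : ℝ →+* ℝ[X]).mapMatrix P * Matrix.scalar n (X : ℝ[X])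
          = Matrix.scalar n (X : ℝ[X]) * (C : ℝ →+* ℝ[X]).mapMatrix P := by
        apply (Matrix.scalar_commute (X : ℝ[X]) (fun r => Commute.all _ r) _).symm
      exact this
    · rw [← _root_.map_mul, ← _root_.map_mul]
      congr 1
      rw [Matrix.mul_assoc, Matrix.nonsing_inv_mul P h, Matrix.mul_one]
  have := congrArg Matrix.det key
  rw [det_mul, det_mul] at this
  unfold Matrix.charpoly
  exact mul_left_cancel₀ hPm.ne_zero (this.trans (mul_comm _ _)) |>.symm

open Matrix Polynomial Finset Module

variable {n : Type*} [Fintype n] [DecidableEq n]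

lemma my_charpoly_diagonal (d : n → ℝ) :
    (diagonal d).charpoly = ∏ i, (X - C (d i)) := by
  unfold Matrix.charpoly charmatrix
  have : Matrix.scalar n (X : ℝ[X]) - (C : ℝ →+* ℝ[X]).mapMatrix (diagonal d)
      = diagonal (fun i => X - C (d i)) := by
    rw [Matrix.scalar, RingHom.mapMatrix_apply]
    rw [Matrix.diagonal_map (by simp)]
    rw [← Matrix.diagonal_sub]
    rfl
  rw [this, det_diagonal]

def NegOn (M : Matrix n n ℝ) (W : Submodule ℝ (n → ℝ)) : Prop :=
  ∀ x ∈ W, x ≠ 0 → x ⬝ᵥ (M *ᵥ x) < 0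

lemma form_conj (T E : Matrix n n ℝ) (x : n → ℝ) :
    x ⬝ᵥ ((T * E * Tᵀ) *ᵥ x) = (Tᵀ *ᵥ x) ⬝ᵥ (E *ᵥ (Tᵀ *ᵥ x)) := by
  rw [← mulVec_mulVec, ← mulVec_mulVec, dotProduct_mulVec x T, ← mulVec_transpose]

lemma dot_diag (d : n → ℝ) (x : n → ℝ) :
    x ⬝ᵥ ((diagonal d) *ᵥ x) = ∑ i, d i * x i ^ 2 := by
  unfold dotProduct
  refine Finset.sum_congr rfl fun i _ => ?_
  rw [mulVec_diagonal]
  ring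

/-- the subspace of vectors supported on `¬ p` -/
noncomputable def suppSub (p : n → Prop) [DecidablePred p] : Submodule ℝ (n → ℝ) :=
  LinearMap.ker (LinearMap.funLeft ℝ ℝ ((↑) : {i // p i} → n))

lemma mem_suppSub {p : n → Prop} [DecidablePred p] {x : n → ℝ} :
    x ∈ suppSub p ↔ ∀ i, p i → x i = 0 := by
  simp only [suppSub, LinearMap.mem_ker, LinearMap.funLeft_apply]
  constructor
  · intro h i hi
    have := congrFun h ⟨i, hi⟩
    simpa using this
  · intro h
    funext j
    simpa using h j j.2

lemma finrank_suppSub (p : n → Prop) [DecidablePred p] :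
    finrank ℝ (suppSub (n := n) p) = Fintype.card {i // ¬ p i} := by
  have h1 := LinearMap.finrank_range_add_finrank_ker
    (LinearMap.funLeft ℝ ℝ ((↑) : {i // p i} → n))
  have h2 : LinearMap.range (LinearMap.funLeft ℝ ℝ ((↑) : {i // p i} → n)) = ⊤ :=
    LinearMap.range_eq_top.2
      (LinearMap.funLeft_surjective_of_injective ℝ ℝ _ Subtype.val_injective)
  rw [h2] at h1
  have h3 : finrank ℝ (⊤ : Submodule ℝ ({i // p i} → ℝ)) = Fintype.card {i // p i} := by
    simp [finrank_top]
  have h4 : finrank ℝ (n → ℝ) = Fintype.card n := by simp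
  have h5 : Fintype.card n = Fintype.card {i // p i} + Fintype.card {i // ¬ p i} := by
    simpa using (Fintype.card_congr (Equiv.sumCompl p)).symm
  unfold suppSub
  omega


lemma neg_diag_exists (d : n → ℝ) :
    ∃ W : Submodule ℝ (n → ℝ), finrank ℝ W = Fintype.card {i // d i < 0} ∧
      NegOn (diagonal d) W := by
  refine ⟨suppSub (fun i => ¬ d i < 0), ?_, ?_⟩
  · rw [finrank_suppSub]
    exact Fintype.card_congr (Equiv.subtypeEquivRight fun i => not_not)
  · intro x hx hx0
    rw [dot_diag]
    obtain ⟨i₀, hi₀⟩ : ∃ i, x i ≠ 0 := Function.ne_iff.1 hx0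
    have hmem := mem_suppSub.1 hx
    have hdi₀ : d i₀ < 0 := by
      by_contra h
      exact hi₀ (hmem i₀ h)
    have hsq : (0:ℝ) < x i₀ ^ 2 :=
      lt_of_le_of_ne (sq_nonneg _) (Ne.symm (pow_ne_zero _ hi₀))
    have : ∑ i, d i * x i ^ 2 < ∑ _i : n, (0:ℝ) := by
      refine Finset.sum_lt_sum ?_ ⟨i₀, Finset.mem_univ _, ?_⟩
      · intro i _
        by_cases h : d i < 0
        · exact mul_nonpos_of_nonpos_of_nonneg h.le (sq_nonneg _)
        · simp [hmem i h]
      · exact mul_neg_of_neg_of_pos hdi₀ hsq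
    simpa using this

lemma neg_diag_bound (d : n → ℝ) (W : Submodule ℝ (n → ℝ))
    (h : NegOn (diagonal d) W) : finrank ℝ W ≤ Fintype.card {i // d i < 0} := by
  by_contra hlt
  push_neg at hlt
  set φ := (LinearMap.funLeft ℝ ℝ ((↑) : {i // d i < 0} → n)).domRestrict W with hφ
  have h1 := LinearMap.finrank_range_add_finrank_ker φ
  have h2 : finrank ℝ (LinearMap.range φ) ≤ Fintype.card {i // d i < 0} := by
    calc finrank ℝ (LinearMap.range φ) ≤ finrank ℝ ({i // d i < 0} → ℝ) :=
          Submodule.finrank_le _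
    _ = Fintype.card {i // d i < 0} := by simp
  have h3 : 0 < finrank ℝ (LinearMap.ker φ) := by omega
  have hker : LinearMap.ker φ ≠ ⊥ := by
    intro hbot
    rw [hbot, finrank_bot] at h3
    exact lt_irrefl 0 h3
  obtain ⟨⟨x, hxW⟩, hxker, hxne⟩ := Submodule.exists_mem_ne_zero_of_ne_bot hker
  have hx0 : ∀ i, d i < 0 → x i = 0 := by
    intro i hi
    have := congrFun (LinearMap.mem_ker.1 hxker) ⟨i, hi⟩
    simpa [hφ, LinearMap.funLeft_apply] using this
  have hxne' : x ≠ 0 := by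
    intro h0
    exact hxne (by ext; simp [h0])
  have := h x hxW hxne'
  rw [dot_diag] at this
  have hge : (0:ℝ) ≤ ∑ i, d i * x i ^ 2 := by
    refine Finset.sum_nonneg fun i _ => ?_
    by_cases hi : d i < 0
    · simp [hx0 i hi]
    · exact mul_nonneg (not_lt.1 hi) (sq_nonneg _)
  linarith

lemma finrank_map_mulVecLin (S : Matrix n n ℝ) (h : IsUnit S.det)
    (W : Submodule ℝ (n → ℝ)) :
    finrank ℝ (W.map S.mulVecLin) = finrank ℝ W := by
  have hinj : Function.Injective S.mulVecLin :=
    mulVec_injective_iff_isUnit.2 ((isUnit_iff_isUnit_det S).2 h)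
  exact ((Submodule.equivMapOfInjective _ hinj W).symm.finrank_eq)

lemma negOn_conj_fwd (T E : Matrix n n ℝ) (W : Submodule ℝ (n → ℝ))
    (h : NegOn (T * E * Tᵀ) W) : NegOn E (W.map (Tᵀ).mulVecLin) := by
  rintro y ⟨x, hxW, rfl⟩ hy0
  have hx0 : x ≠ 0 := by rintro rfl; simp at hy0
  have := h x hxW hx0
  rw [form_conj] at this
  simpa only [mulVecLin_apply] using this

lemma negOn_conj_bwd (T E : Matrix n n ℝ) (hT : IsUnit T.det)
    (W : Submodule ℝ (n → ℝ)) (h : NegOn E W) :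
    NegOn (T * E * Tᵀ) (W.map ((Tᵀ)⁻¹).mulVecLin) := by
  have hTt : IsUnit (Tᵀ).det := by rwa [det_transpose]
  rintro x ⟨y, hyW, rfl⟩ hx0
  have hy0 : y ≠ 0 := by rintro rfl; simp at hx0
  rw [form_conj]
  have hTy : Tᵀ *ᵥ ((Tᵀ)⁻¹.mulVecLin y) = y := by
    simp only [mulVecLin_apply, mulVec_mulVec, Matrix.mul_nonsing_inv _ hTt, one_mulVec]
  rw [hTy]
  exact h y hyW hy0

open Matrix Polynomial Finset Module

variable {n : Type*} [Fintype n] [DecidableEq n]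

lemma real_ct_eq_t (A : Matrix n n ℝ) : Aᴴ = Aᵀ := by
  ext i j
  simp [conjTranspose_apply]

lemma herm_transpose {A : Matrix n n ℝ} (h : A.IsHermitian) : Aᵀ = A := by
  rw [← real_ct_eq_t]; exact h

lemma prod_X_sub_C_roots (f : n → ℝ) :
    (∏ i, (X - C (f i))).roots = Multiset.map f univ.val := by
  rw [Finset.prod_eq_multiset_prod]
  rw [show Multiset.map (fun i => X - C (f i)) univ.val
      = Multiset.map (fun a => X - C a) (Multiset.map f univ.val) by
    rw [Multiset.map_map]; rfl]
  exact roots_multiset_prod_X_sub_C _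

open scoped MatrixOrder in
lemma key (P Q : Matrix n n ℝ) (hP : P.PosDef) (hQ : Q.IsHermitian)
    (e : n → ℝ) (hc : (Q * P⁻¹).charpoly = ∏ i, (X - C (e i))) (μ : ℝ) :
    (∃ W : Submodule ℝ (n → ℝ),
        finrank ℝ W = Fintype.card {i // μ < e i} ∧ NegOn (μ • P - Q) W)
    ∧ ∀ W : Submodule ℝ (n → ℝ), NegOn (μ • P - Q) W →
        finrank ℝ W ≤ Fintype.card {i // μ < e i} := by
  classical
  set S := CFC.sqrt P with hSdef
  have hSh : S.IsHermitian := (Matrix.nonneg_iff_posSemidef.1 (CFC.sqrt_nonneg P)).1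
  have hSS : S * S = P := CFC.sqrt_mul_sqrt_self P (Matrix.nonneg_iff_posSemidef.2 hP.posSemidef)
  have hdS : IsUnit S.det := by
    refine isUnit_iff_ne_zero.2 fun h0 => hP.det_pos.ne' ?_
    rw [← hSS, det_mul, h0, mul_zero]
  have hSt : Sᵀ = S := herm_transpose hSh
  have h1 : S * S⁻¹ = 1 := mul_nonsing_inv _ hdS
  have h2 : S⁻¹ * S = 1 := nonsing_inv_mul _ hdS
  set Cm := S⁻¹ * Q * S⁻¹ with hCdef
  have hCh : Cm.IsHermitian := by
    have hSi : (S⁻¹).IsHermitian := hSh.inv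
    show Cmᴴ = Cm
    rw [hCdef, conjTranspose_mul, conjTranspose_mul, hSi.eq, hQ.eq, Matrix.mul_assoc]
  have hQeq : Q = S * Cm * S := by
    have : S * (S⁻¹ * Q * S⁻¹) * S = S * S⁻¹ * Q * (S⁻¹ * S) := by
      simp only [Matrix.mul_assoc]
    rw [hCdef, this, h1, h2, Matrix.one_mul, Matrix.mul_one]
  have hQP : Q * P⁻¹ = S * Cm * S⁻¹ := by
    have h3 : S * (S⁻¹ * S⁻¹) = S⁻¹ := by rw [← Matrix.mul_assoc, h1, Matrix.one_mul]
    rw [hQeq, ← hSS, Matrix.mul_inv_rev]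
    calc S * Cm * S * (S⁻¹ * S⁻¹) = S * Cm * (S * (S⁻¹ * S⁻¹)) := by
          simp only [Matrix.mul_assoc]
    _ = S * Cm * S⁻¹ := by rw [h3]
  have hcC : Cm.charpoly = ∏ i, (X - C (e i)) := by
    rw [← hc, hQP, my_charpoly_conj S Cm hdS]
  set ν := hCh.eigenvalues with hνdef
  set U := (hCh.eigenvectorUnitary : Matrix n n ℝ) with hUdef
  have hspec : Cm = U * diagonal ν * Uᵀ := by
    have := hCh.spectral_theorem
    rw [Unitary.conjStarAlgAut_apply] at this
    rw [← real_ct_eq_t]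
    exact this
  have hUU : U * Uᵀ = 1 := by
    have := mem_unitaryGroup_iff.mp hCh.eigenvectorUnitary.2
    rwa [star_eq_conjTranspose, real_ct_eq_t] at this
  have hdU : IsUnit U.det := by
    refine IsUnit.of_mul_eq_one (Uᵀ).det ?_
    rw [← det_mul, hUU, det_one]
  have hUinv : U⁻¹ = Uᵀ := inv_eq_right_inv hUU
  have hcD : (diagonal ν).charpoly = ∏ i, (X - C (e i)) := by
    rw [← hcC, hspec, ← hUinv, my_charpoly_conj U (diagonal ν) hdU]
  -- multiset equality and counting
  have hms : Multiset.map e univ.val = Multiset.map ν univ.val := by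
    have hpp : ∏ i, (X - C (e i)) = ∏ i, (X - C (ν i)) := by
      rw [← hcD, my_charpoly_diagonal]
    have := congrArg Polynomial.roots hpp
    rwa [prod_X_sub_C_roots, prod_X_sub_C_roots] at this
  have hcnt : Fintype.card {i // μ < e i} = Fintype.card {i // (μ - ν i : ℝ) < 0} := by
    have hμe : Fintype.card {i // μ < e i}
        = Multiset.countP (fun x => μ < x) (Multiset.map e univ.val) := by
      rw [Multiset.countP_map, Fintype.card_subtype]
      rfl
    have hμν : Fintype.card {i // μ < ν i}
        = Multiset.countP (fun x => μ < x) (Multiset.map ν univ.val) := by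
      rw [Multiset.countP_map, Fintype.card_subtype]
      rfl
    rw [hμe, hms, ← hμν]
    exact Fintype.card_congr (Equiv.subtypeEquivRight fun i => by
      constructor <;> intro h <;> linarith)
  set T := S * U with hTdef
  have hdT : IsUnit T.det := by rw [det_mul]; exact hdS.mul hdU
  have hdTt : IsUnit (Tᵀ).det := by rwa [det_transpose]
  have hTt : Tᵀ = Uᵀ * S := by rw [transpose_mul, hSt]
  set D := diagonal (fun i => μ - ν i) with hDdef
  have hM : μ • P - Q = T * D * Tᵀ := by
    have hDsplit : D = μ • (1 : Matrix n n ℝ) - diagonal ν := by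
      ext i j
      by_cases h : i = j
      · subst h; simp [hDdef]
      · simp [hDdef, diagonal_apply_ne _ h, Matrix.one_apply_ne h]
    have hmid : U * D * Uᵀ = μ • (1 : Matrix n n ℝ) - Cm := by
      rw [hDsplit, Matrix.mul_sub, Matrix.sub_mul, hspec]
      congr 1
      rw [Matrix.mul_smul, Matrix.mul_one, Matrix.smul_mul, hUU]
    have : T * D * Tᵀ = S * (U * D * Uᵀ) * S := by
      rw [hTdef, hTt]
      simp only [Matrix.mul_assoc]
    rw [this, hmid, Matrix.mul_sub, Matrix.sub_mul, Matrix.mul_smul, Matrix.mul_one,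
      Matrix.smul_mul, hSS, ← hQeq]
  constructor
  · obtain ⟨W0, hW0rank, hW0neg⟩ := neg_diag_exists (fun i => μ - ν i)
    refine ⟨W0.map ((Tᵀ)⁻¹).mulVecLin, ?_, ?_⟩
    · rw [finrank_map_mulVecLin _ (isUnit_nonsing_inv_det _ hdTt), hW0rank, hcnt]
    · rw [hM]
      exact negOn_conj_bwd T D hdT W0 hW0neg
  · intro W hW
    rw [hM] at hW
    have hb := neg_diag_bound _ _ (negOn_conj_fwd T D W hW)
    rw [finrank_map_mulVecLin _ hdTt] at hb
    rwa [hcnt]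

lemma form_snoc (M' : Matrix (Fin (N+1)) (Fin (N+1)) ℝ) (x : Fin (N+1) → ℝ)
    (hx : x (Fin.last N) = 0) :
    x ⬝ᵥ (M' *ᵥ x)
      = (x ∘ Fin.castSucc) ⬝ᵥ ((M'.submatrix Fin.castSucc Fin.castSucc) *ᵥ (x ∘ Fin.castSucc)) := by
  simp only [dotProduct, mulVec, dotProduct, submatrix_apply, Function.comp_apply]
  rw [Fin.sum_univ_castSucc]
  simp only [hx, zero_mul, add_zero]
  refine Finset.sum_congr rfl fun i _ => ?_
  congr 1
  rw [Fin.sum_univ_castSucc]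
  simp [hx]

lemma posDef_submatrix_castSucc {M : Matrix (Fin (N+1)) (Fin (N+1)) ℝ} (h : M.PosDef) :
    (M.submatrix Fin.castSucc Fin.castSucc).PosDef := by
  constructor
  · show _ᴴ = _
    rw [conjTranspose_submatrix, h.1.eq]
  · exact (h.submatrix (Fin.castSucc_injective N)).2

/-- extension by zero as a linear map -/
def extZero : (Fin N → ℝ) →ₗ[ℝ] (Fin (N+1) → ℝ) where
  toFun x := Fin.snoc x 0
  map_add' x y := by
    funext i
    refine Fin.lastCases ?_ (fun j => ?_) i <;> simp
  map_smul' c x := by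
    funext i
    refine Fin.lastCases ?_ (fun j => ?_) i <;> simp

lemma extZero_injective : Function.Injective (extZero (N := N)) := by
  intro x y h
  funext i
  have := congrFun h i.castSucc
  simpa [extZero] using this

lemma finrank_le_inf_ker_add_one (W : Submodule ℝ (Fin (N+1) → ℝ)) :
    finrank ℝ W ≤
      finrank ℝ ↥(W ⊓ LinearMap.ker (LinearMap.proj (R := ℝ)
        (φ := fun _ : Fin (N+1) => ℝ) (Fin.last N))) + 1 := by
  set f := LinearMap.proj (R := ℝ) (φ := fun _ : Fin (N+1) => ℝ) (Fin.last N) with hf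
  have h := Submodule.finrank_sup_add_finrank_inf_eq W (LinearMap.ker f)
  have hrn := LinearMap.finrank_range_add_finrank_ker f
  have hr1 : finrank ℝ ↥(LinearMap.range f) ≤ 1 := by
    calc finrank ℝ ↥(LinearMap.range f) ≤ finrank ℝ ℝ := Submodule.finrank_le _
    _ = 1 := finrank_self ℝ
  have hsup : finrank ℝ ↥(W ⊔ LinearMap.ker f) ≤ finrank ℝ (Fin (N+1) → ℝ) :=
    Submodule.finrank_le _
  omega

lemma finrank_map_funLeft (W' : Submodule ℝ (Fin (N+1) → ℝ))
    (hW' : ∀ x ∈ W', x (Fin.last N) = 0) :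
    finrank ℝ ↥(W'.map (LinearMap.funLeft ℝ ℝ (Fin.castSucc : Fin N → Fin (N+1))))
      = finrank ℝ W' := by
  set ρ := LinearMap.funLeft ℝ ℝ (Fin.castSucc : Fin N → Fin (N+1)) with hρ
  have hrn := LinearMap.finrank_range_add_finrank_ker (ρ.domRestrict W')
  have hrange : LinearMap.range (ρ.domRestrict W') = W'.map ρ :=
    LinearMap.range_domRestrict W' ρ
  have hker : LinearMap.ker (ρ.domRestrict W') = ⊥ := by
    rw [Submodule.eq_bot_iff]
    rintro ⟨x, hxW⟩ hx
    have hx' : ρ x = 0 := by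
      simpa [LinearMap.mem_ker, LinearMap.domRestrict_apply] using hx
    have : x = 0 := by
      funext i
      refine Fin.lastCases ?_ (fun j => ?_) i
      · exact hW' x hxW
      · have := congrFun hx' j
        simpa [hρ, LinearMap.funLeft_apply] using this
    exact Subtype.ext this
  rw [hrange, hker, finrank_bot, add_zero] at hrn
  exact hrn

theorem stmt_14 (N : ℕ) (A' B' : Matrix (Fin (N+1)) (Fin (N+1)) ℝ)
    (hA : A'.PosDef) (hB : B'.PosDef)
    (e1 : Fin (N+1) → ℝ) (e2 : Fin N → ℝ)
    (h1 : Monotone e1) (h2 : Monotone e2)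
    (hc1 : (A' * B'⁻¹).charpoly = ∏ i, (Polynomial.X - Polynomial.C (e1 i)))
    (hc2 : ((A'.submatrix Fin.castSucc Fin.castSucc)
        * (B'.submatrix Fin.castSucc Fin.castSucc)⁻¹).charpoly
      = ∏ i, (Polynomial.X - Polynomial.C (e2 i))) :
    ∀ k : Fin N, e1 k.castSucc ≤ e2 k ∧ e2 k ≤ e1 k.succ := by
  classical
  intro k
  set Am := A'.submatrix Fin.castSucc Fin.castSucc with hAdef
  set Bm := B'.submatrix Fin.castSucc Fin.castSucc with hBdef
  have hApos : Am.PosDef := posDef_submatrix_castSucc hA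
  have hBpos : Bm.PosDef := posDef_submatrix_castSucc hB
  have hsub : ∀ μ : ℝ, (μ • B' - A').submatrix Fin.castSucc Fin.castSucc = μ • Bm - Am := by
    intro μ
    ext i j
    simp [hAdef, hBdef, submatrix_apply]
  have hkN : (k : ℕ) < N := k.isLt
  constructor
  · by_contra hcon
    push_neg at hcon
    set μ := e2 k with hμ
    have hsubc1 : Finset.Ici k.castSucc ⊆ univ.filter (fun i => μ < e1 i) := by
      intro i hi
      rw [Finset.mem_filter]
      exact ⟨Finset.mem_univ _, lt_of_lt_of_le hcon (h1 (Finset.mem_Ici.1 hi))⟩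
    have hcard1 : (N+1) - (k : ℕ) ≤ Fintype.card {i : Fin (N+1) // μ < e1 i} := by
      rw [Fintype.card_subtype]
      have := Finset.card_le_card hsubc1
      rwa [Fin.card_Ici, Fin.coe_castSucc] at this
    have hsubc2 : univ.filter (fun j => μ < e2 j) ⊆ Finset.Ioi k := by
      intro j hj
      rw [Finset.mem_filter] at hj
      rw [Finset.mem_Ioi]
      by_contra hle
      push_neg at hle
      exact absurd hj.2 (not_lt.2 (h2 hle))
    have hcard2 : Fintype.card {j : Fin N // μ < e2 j} ≤ N - 1 - (k : ℕ) := by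
      rw [Fintype.card_subtype]
      have := Finset.card_le_card hsubc2
      rwa [Fin.card_Ioi] at this
    obtain ⟨W, hWrank, hWneg⟩ := (key B' A' hB hA.1 e1 hc1 μ).1
    have hWK := finrank_le_inf_ker_add_one W
    set K := LinearMap.ker (LinearMap.proj (R := ℝ)
      (φ := fun _ : Fin (N+1) => ℝ) (Fin.last N)) with hK
    set W' := W ⊓ K with hW'
    have hW'zero : ∀ x ∈ W', x (Fin.last N) = 0 := by
      intro x hx
      have := hx.2
      simpa [hK, LinearMap.mem_ker] using this
    set Wρ := W'.map (LinearMap.funLeft ℝ ℝ (Fin.castSucc : Fin N → Fin (N+1))) with hWρ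
    have hWρrank : finrank ℝ Wρ = finrank ℝ W' := finrank_map_funLeft W' hW'zero
    have hWρneg : NegOn (μ • Bm - Am) Wρ := by
      rintro y ⟨x, hxW', rfl⟩ hy0
      have hx0 : x ≠ 0 := by rintro rfl; simp at hy0
      have hneg := hWneg x hxW'.1 hx0
      have hform := form_snoc (μ • B' - A') x (hW'zero x hxW')
      rw [hform, hsub μ] at hneg
      exact hneg
    have hbound := (key Bm Am hBpos hApos.1 e2 hc2 μ).2 Wρ hWρneg
    omega
  · by_contra hcon
    push_neg at hcon
    set μ := e1 k.succ with hμ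
    have hsubc2 : Finset.Ici k ⊆ univ.filter (fun j => μ < e2 j) := by
      intro j hj
      rw [Finset.mem_filter]
      exact ⟨Finset.mem_univ _, lt_of_lt_of_le hcon (h2 (Finset.mem_Ici.1 hj))⟩
    have hcard2 : N - (k : ℕ) ≤ Fintype.card {j : Fin N // μ < e2 j} := by
      rw [Fintype.card_subtype]
      have := Finset.card_le_card hsubc2
      rwa [Fin.card_Ici] at this
    have hsubc1 : univ.filter (fun i => μ < e1 i) ⊆ Finset.Ioi k.succ := by
      intro i hi
      rw [Finset.mem_filter] at hi
      rw [Finset.mem_Ioi]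
      by_contra hle
      push_neg at hle
      exact absurd hi.2 (not_lt.2 (h1 hle))
    have hcard1 : Fintype.card {i : Fin (N+1) // μ < e1 i} ≤ (N+1) - 1 - ((k : ℕ)+1) := by
      rw [Fintype.card_subtype]
      have := Finset.card_le_card hsubc1
      rwa [Fin.card_Ioi, Fin.val_succ] at this
    obtain ⟨W, hWrank, hWneg⟩ := (key Bm Am hBpos hApos.1 e2 hc2 μ).1
    set Wε := W.map extZero with hWε
    have hWεrank : finrank ℝ Wε = finrank ℝ W :=
      ((Submodule.equivMapOfInjective _ extZero_injective W).symm.finrank_eq)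
    have hWεneg : NegOn (μ • B' - A') Wε := by
      rintro x ⟨y, hyW, rfl⟩ hx0
      have hy0 : y ≠ 0 := by rintro rfl; simp at hx0
      have hlast : (extZero y) (Fin.last N) = 0 := by simp [extZero]
      have hcomp : (extZero y) ∘ Fin.castSucc = y := by
        funext i; simp [extZero]
      have hform := form_snoc (μ • B' - A') (extZero y) hlast
      rw [hform, hcomp, hsub μ]
      exact hWneg y hyW hy0
    have hbound := (key B' A' hB hA.1 e1 hc1 μ).2 Wε hWεneg
    omega
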